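/- Let b : ℤ → ℝ and a : ℤ → ℝ be sequences, and define h₁ = (1/2)b² + a, h₂ = (1/3)b³ + a(b + b̄) (with b̄(n) = b(n+1)). Define Q_i = ∂H_i/∂b and B_i = Δ(a·∂H_i/∂a) where H_i = ∑_k T^k h_i formally, so that Q₁ = b, B₁ = a − a̲, Q₂ = b² + a + a̲, B₂ = a(b+b̄) − a̲(b+b̲). Then the formal Poisson bracket summand B₁Q₂ − Q₁B₂ satisfies ∑_{n=m}^{M} (B₁Q₂ − Q₁B₂)(n) = G(M) − G(m−1) for G = a² − b̄ b a, for all integers m ≤ M. -/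

import Mathlib

/-- Involution of the first two Toda Hamiltonians in Flaschka variables,
as an exact telescoping identity: ∑_{n=m}^{M} (B₁Q₂ − Q₁B₂)(n)
= G(M) − G(m−1) with G = a² − b̄ b a. -/
theorem toda_poisson_telescoping (a b : ℤ → ℝ)
    (Q1 B1 Q2 B2 G : ℤ → ℝ)
    (hQ1 : ∀ n, Q1 n = b n)
    (hB1 : ∀ n, B1 n = a n - a (n - 1))
    (hQ2 : ∀ n, Q2 n = (b n) ^ 2 + a n + a (n - 1))
    (hB2 : ∀ n, B2 n
      = a n * (b n + b (n + 1)) - a (n - 1) * (b n + b (n - 1)))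
    (hG : ∀ n, G n = (a n) ^ 2 - b (n + 1) * b n * a n) :
    ∀ m M : ℤ, m ≤ M →
      ∑ n ∈ Finset.Icc m M, (B1 n * Q2 n - Q1 n * B2 n) = G M - G (m - 1) := by
  have key : ∀ n : ℤ, B1 n * Q2 n - Q1 n * B2 n = G n - G (n - 1) := by
    intro n
    rw [hB1, hQ1, hQ2, hB2, hG, hG]
    have : n - 1 + 1 = n := by ring
    rw [this]
    ring
  intro m M hmM
  refine Int.le_induction (motive := fun M _ => ∑ n ∈ Finset.Icc m M, (B1 n * Q2 n - Q1 n * B2 n) = G M - G (m - 1)) ?_ ?_ M hmM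
  · rw [Finset.Icc_self, Finset.sum_singleton, key]
  · intro M hM ih
    have hins : Finset.Icc m (M + 1) = insert (M + 1) (Finset.Icc m M) := by
      ext x; simp [Finset.mem_Icc]; omega
    rw [hins, Finset.sum_insert (by simp [Finset.mem_Icc]), ih, key]
    have : M + 1 - 1 = M := by ring
    rw [this]; ring
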